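/- For all real numbers θ₀, θ with 0 < θ₀ < θ < 1 there exists ε > 0 such that atanh(θ·r) ≥ (1+ε)·atanh(θ₀·r) for every r ∈ [0,1]. -/

import Mathlib

open Real

/-- the inverse hyperbolic tangent `atanh x = ½ log((1+x)/(1-x))`. -/
noncomputable def atanh (x : ℝ) : ℝ := (1 / 2) * Real.log ((1 + x) / (1 - x))

lemma atanh_zero : atanh 0 = 0 := by simp [atanh]

lemma hasDerivAt_atanh {t : ℝ} (h1 : -1 < t) (h2 : t < 1) :
    HasDerivAt atanh (1 / (1 - t ^ 2)) t := by
  have hp : 0 < 1 + t := by linarith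
  have hm : 0 < 1 - t := by linarith
  have hF : HasDerivAt (fun x : ℝ => (1 / 2) * (Real.log (1 + x) - Real.log (1 - x)))
      (1 / (1 - t ^ 2)) t := by
    have hlogp : HasDerivAt (fun x : ℝ => Real.log (1 + x)) (1 / (1 + t)) t := by
      have h := ((hasDerivAt_id t).const_add 1).log hp.ne'
      simpa using h
    have hlogm : HasDerivAt (fun x : ℝ => Real.log (1 - x)) (-1 / (1 - t)) t := by
      have h := ((hasDerivAt_id t).const_sub 1).log hm.ne'
      simpa [neg_div] using h
    have h : HasDerivAt (fun x : ℝ => (1 / 2) * (Real.log (1 + x) - Real.log (1 - x)))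
        ((1 / 2 : ℝ) * (1 / (1 + t) - -1 / (1 - t))) t := ((hlogp.sub hlogm).const_mul (1 / 2 : ℝ))
    convert h using 1
    have hne1 : (1 + t) ≠ 0 := hp.ne'
    have hne2 : (1 - t) ≠ 0 := hm.ne'
    have hne3 : (1 - t ^ 2) ≠ 0 := by
      intro h'; apply hne1; nlinarith [sq_nonneg t]
    field_simp
    ring
  have heq : (fun x : ℝ => (1 / 2) * (Real.log (1 + x) - Real.log (1 - x))) =ᶠ[nhds t] atanh := by
    have hs : Set.Ioo (-1 : ℝ) 1 ∈ nhds t := isOpen_Ioo.mem_nhds ⟨h1, h2⟩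
    filter_upwards [hs] with x hx
    have hxp : 0 < 1 + x := by linarith [hx.1]
    have hxm : 0 < 1 - x := by linarith [hx.2]
    rw [atanh, Real.log_div hxp.ne' hxm.ne']
  exact hF.congr_of_eventuallyEq heq.symm

lemma atanh_scale {c x : ℝ} (hc : 1 ≤ c) (hx : 0 ≤ x) (hcx : c * x < 1) :
    c * atanh x ≤ atanh (c * x) := by
  have hc0 : 0 < c := lt_of_lt_of_le one_pos hc
  have hx1 : x < 1 := by nlinarith
  set g : ℝ → ℝ := fun t => atanh (c * t) - c * atanh t with hg
  have key : ∀ t ∈ Set.Icc (0 : ℝ) x, HasDerivAt g (c / (1 - (c * t) ^ 2) - c / (1 - t ^ 2)) t := by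
    intro t ht
    have ht1 : t < 1 := lt_of_le_of_lt ht.2 hx1
    have hct : c * t < 1 :=
      lt_of_le_of_lt (mul_le_mul_of_nonneg_left ht.2 hc0.le) hcx
    have hct0 : 0 ≤ c * t := mul_nonneg hc0.le ht.1
    have h1 : HasDerivAt (fun t => atanh (c * t)) (c / (1 - (c * t) ^ 2)) t := by
      have := (hasDerivAt_atanh (t := c * t) (by linarith) hct).comp t
        ((hasDerivAt_id t).const_mul c)
      exact this.congr_deriv (by ring)
    have h2 : HasDerivAt (fun t => c * atanh t) (c / (1 - t ^ 2)) t := by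
      have := (hasDerivAt_atanh (t := t) (by linarith [ht.1]) ht1).const_mul c
      simpa [div_eq_mul_inv] using this
    exact h1.sub h2
  have hmono : MonotoneOn g (Set.Icc 0 x) := by
    apply monotoneOn_of_deriv_nonneg (convex_Icc 0 x)
    · exact ContinuousOn.congr
        (continuousOn_of_forall_continuousAt fun t ht => (key t ht).continuousAt)
        (fun t ht => rfl)
    · intro t ht
      rw [interior_Icc] at ht
      exact ((key t ⟨le_of_lt ht.1, le_of_lt ht.2⟩).differentiableAt).differentiableWithinAt
    · intro t ht
      rw [interior_Icc] at ht
      rw [(key t ⟨le_of_lt ht.1, le_of_lt ht.2⟩).deriv]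
      have ht1 : t < 1 := lt_trans ht.2 hx1
      have ht0 : 0 ≤ t := ht.1.le
      have hct : c * t < 1 :=
        lt_of_le_of_lt (mul_le_mul_of_nonneg_left ht.2.le hc0.le) hcx
      have hct0 : 0 ≤ c * t := mul_nonneg hc0.le ht0
      have htct : t ≤ c * t := by nlinarith
      have hpos1 : 0 < 1 - (c * t) ^ 2 := by nlinarith
      have hpos2 : 0 < 1 - t ^ 2 := by nlinarith
      have hle : 1 - (c * t) ^ 2 ≤ 1 - t ^ 2 := by nlinarith
      have := div_le_div_of_nonneg_left (le_of_lt hc0) hpos1 hle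
      linarith
  have h0 : g 0 = 0 := by simp [hg, atanh_zero]
  have := hmono (Set.left_mem_Icc.mpr hx) (Set.right_mem_Icc.mpr hx) hx
  rw [h0] at this
  simpa [hg] using this

/-- **Uniform comparison of BP update functions.**
For `0 < θ₀ < θ < 1` there exists `ε > 0` with
`atanh(θ r) ≥ (1+ε)·atanh(θ₀ r)` for every `r ∈ [0,1]`. -/
theorem atanh_uniform_comparison (θ₀ θ : ℝ) (h0 : 0 < θ₀) (h1 : θ₀ < θ) (h2 : θ < 1) :
    ∃ ε > 0, ∀ r ∈ Set.Icc (0 : ℝ) 1, (1 + ε) * atanh (θ₀ * r) ≤ atanh (θ * r) := by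
  refine ⟨θ / θ₀ - 1, by
    have : 1 < θ / θ₀ := (one_lt_div h0).mpr h1
    linarith, fun r hr => ?_⟩
  have hc : 1 ≤ θ / θ₀ := le_of_lt ((one_lt_div h0).mpr h1)
  have hx : 0 ≤ θ₀ * r := mul_nonneg h0.le hr.1
  have hcx : (θ / θ₀) * (θ₀ * r) = θ * r := by field_simp
  have hθr : θ * r < 1 := by nlinarith [hr.1, hr.2]
  have := atanh_scale hc hx (by rw [hcx]; exact hθr)
  rw [hcx] at this
  have e : 1 + (θ / θ₀ - 1) = θ / θ₀ := by ring
  rw [e]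
  exact this
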